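/- Let V be a 4-dimensional vector space over ℂ and let ω, ω′ be elements of the second exterior power Λ²V (equivalently, degree-2 homogeneous elements of the exterior algebra of V). Then there exist complex numbers a, b, not both zero, such that (a·ω + b·ω′) ∧ (a·ω + b·ω′) = 0 in Λ⁴V. (Any line in the projectivized space of 2-forms meets the quadric of forms of rank at most 2.) -/

import Mathlib

open ExteriorAlgebra

lemma top_power_le_span (V : Type*) [AddCommGroup V] [Module ℂ V]
    (b : Module.Basis (Fin 4) ℂ V) :
    ⋀[ℂ]^4 V ≤ ℂ ∙ (ιMulti ℂ 4 (M := V) ⇑b) := by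
  rw [← ExteriorAlgebra.ιMulti_span_fixedDegree, Submodule.span_le]
  rintro _ ⟨v, rfl⟩
  have hv : (fun i => v i) = fun i => ∑ j, b.repr (v i) j • b j := by
    funext i; exact (b.sum_repr (v i)).symm
  have expand : ιMulti ℂ 4 v = ∑ r : Fin 4 → Fin 4,
      (∏ i, b.repr (v i) (r i)) • ιMulti ℂ 4 (fun i => b (r i)) := by
    conv_lhs => rw [show v = fun i => ∑ j, b.repr (v i) j • b j from hv]
    rw [show (ιMulti ℂ 4 (M := V)) (fun i => ∑ j, b.repr (v i) j • b j)
        = (ιMulti ℂ 4 (M := V)).toMultilinearMap (fun i => ∑ j, b.repr (v i) j • b j) from rfl,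
      MultilinearMap.map_sum]
    refine Finset.sum_congr rfl fun r _ => ?_
    exact ((ιMulti ℂ 4 (M := V)).toMultilinearMap.map_smul_univ
      (fun i => b.repr (v i) (r i)) (fun i => b (r i)))
  rw [expand]
  refine Submodule.sum_mem _ fun r _ => Submodule.smul_mem _ _ ?_
  by_cases hinj : Function.Injective r
  · have hbij : Function.Bijective r := (Finite.injective_iff_bijective).mp hinj
    set σ : Equiv.Perm (Fin 4) := Equiv.ofBijective r hbij
    have : (fun i => b (r i)) = (⇑b) ∘ σ := rfl
    rw [this, AlternatingMap.map_perm]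
    exact Submodule.smul_mem _ _ (Submodule.mem_span_singleton_self _)
  · have : ¬ Function.Injective (fun i => b (r i)) := by
      intro h
      exact hinj fun i j hij => b.injective.eq_iff.mp (congrArg b hij) |> fun _ => by
        exact h (by simp [hij])
    rw [AlternatingMap.map_eq_zero_of_not_injective _ _ this]
    exact Submodule.zero_mem _

/-- For `ω, ω′` in the second exterior power of a 4-dimensional complex vector space
(viewed as degree-2 homogeneous elements of the exterior algebra), some nontrivial
linear combination `a·ω + b·ω′` has vanishing wedge square in `Λ⁴V`: any line in the
projectivized space of 2-forms meets the quadric of forms of rank at most 2. -/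
theorem exists_combination_wedge_sq_eq_zero
    (V : Type*) [AddCommGroup V] [Module ℂ V] [FiniteDimensional ℂ V]
    (h4 : Module.finrank ℂ V = 4)
    (ω ω' : ExteriorAlgebra ℂ V) (hω : ω ∈ ⋀[ℂ]^2 V) (hω' : ω' ∈ ⋀[ℂ]^2 V) :
    ∃ a b : ℂ, ¬(a = 0 ∧ b = 0) ∧ (a • ω + b • ω') * (a • ω + b • ω') = 0 := by
  have b : Module.Basis (Fin 4) ℂ V := (Module.finBasis ℂ V).reindex (finCongr h4)
  set E := ιMulti ℂ 4 (M := V) ⇑b with hE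
  have hle := top_power_le_span V b
  have mul_mem : ∀ x y : ExteriorAlgebra ℂ V, x ∈ ⋀[ℂ]^2 V → y ∈ ⋀[ℂ]^2 V →
      x * y ∈ ⋀[ℂ]^4 V := by
    intro x y hx hy
    have : (⋀[ℂ]^4 V : Submodule ℂ (ExteriorAlgebra ℂ V)) = ⋀[ℂ]^2 V * ⋀[ℂ]^2 V := by
      rw [exteriorPower, exteriorPower, ← pow_add]
    rw [this]
    exact Submodule.mul_mem_mul hx hy
  obtain ⟨p, hp⟩ := Submodule.mem_span_singleton.mp (hle (mul_mem _ _ hω hω))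
  obtain ⟨q, hq⟩ := Submodule.mem_span_singleton.mp (hle (mul_mem _ _ hω hω'))
  obtain ⟨q', hq'⟩ := Submodule.mem_span_singleton.mp (hle (mul_mem _ _ hω' hω))
  obtain ⟨r, hr⟩ := Submodule.mem_span_singleton.mp (hle (mul_mem _ _ hω' hω'))
  have key : ∀ a c : ℂ, (a • ω + c • ω') * (a • ω + c • ω') =
      (a * a * p + a * c * q + c * a * q' + c * c * r) • E := by
    intro a c
    rw [add_mul, mul_add, mul_add, smul_mul_smul_comm, smul_mul_smul_comm,
      smul_mul_smul_comm, smul_mul_smul_comm, ← hp, ← hq, ← hq', ← hr]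
    simp only [smul_smul, add_smul]
    ring_nf
    module
  by_cases hp0 : p = 0
  · exact ⟨1, 0, by simp, by rw [key]; simp [hp0]⟩
  · set f : Polynomial ℂ := Polynomial.C p * Polynomial.X ^ 2
      + Polynomial.C (q + q') * Polynomial.X + Polynomial.C r with hf
    have hdeg : f.degree = 2 := by
      rw [hf]; compute_degree!
    obtain ⟨z, hz⟩ := IsAlgClosed.exists_root f (by rw [hdeg]; norm_num)
    refine ⟨z, 1, by simp, ?_⟩
    rw [key]
    have h0 : p * z ^ 2 + (q + q') * z + r = 0 := by
      have := hz
      simp [hf, Polynomial.IsRoot] at this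
      linear_combination this
    have : z * z * p + z * 1 * q + 1 * z * q' + 1 * 1 * r = 0 := by linear_combination h0
    rw [this, zero_smul]
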